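/- Let k be an infinite field and let p ∈ k[x, y, z] vanish at every point of the union of the three coordinate axes in k³ (i.e. p(t,0,0) = p(0,t,0) = p(0,0,t) = 0 for all t ∈ k). Then p lies in the ideal generated by xy, yz, and zx. -/

import Mathlib

open MvPolynomial

noncomputable def axv (k : Type*) [Field k] (i : Fin 3) : Fin 3 → MvPolynomial (Fin 3) k :=
  fun j => if j = i then X i else 0

lemma evalAux {k : Type*} [Field k] (i : Fin 3) (x : Fin 3 → k) (p : MvPolynomial (Fin 3) k) :
    eval x (bind₁ (axv k i) p) = eval (fun j => if j = i then x i else 0) p := by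
  rw [bind₁, aeval_def, eval_eval₂]
  have h1 : (eval x).comp (algebraMap k (MvPolynomial (Fin 3) k)) = RingHom.id k := by
    ext a; simp
  rw [h1, eval₂_id]
  have e : (fun s => eval x (axv k i s)) = fun j => if j = i then x i else 0 := by
    ext j
    unfold axv
    split_ifs with h <;> simp [h]
  rw [e]

lemma coeffAux {k : Type*} [Field k] (i : Fin 3) (m : Fin 3 →₀ ℕ)
    (hm : ∀ j, j ≠ i → m j = 0) (p : MvPolynomial (Fin 3) k) :
    coeff m (bind₁ (axv k i) p) = coeff m p := by
  classical
  induction p using MvPolynomial.induction_on' with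
  | add p q hp hq => simp [map_add, coeff_add, hp, hq]
  | monomial m' c =>
    by_cases hc : ∀ j, j ≠ i → m' j = 0
    · have hm' : m' = Finsupp.single i (m' i) := by
        ext j
        by_cases h : j = i
        · subst h; simp
        · simp [hc j h, Finsupp.single_eq_of_ne' (Ne.symm h)]
      rw [hm', ← mul_one c, ← C_mul_monomial, ← X_pow_eq_monomial, map_mul, map_pow,
        bind₁_X_right, bind₁_C_right]
      simp [axv]
    · push_neg at hc
      obtain ⟨j, hj, hj'⟩ := hc
      have hne : m' ≠ m := fun h => hj' (by rw [h]; exact hm j hj)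
      have hL : bind₁ (axv k i) (monomial m' c) = 0 := by
        rw [monomial_eq, map_mul, map_finsuppProd]
        have : (m'.prod fun n e => (bind₁ (axv k i)) (X n ^ e)) = 0 := by
          apply Finset.prod_eq_zero (Finsupp.mem_support_iff.mpr hj')
          show (bind₁ (axv k i)) (X j ^ m' j) = 0
          rw [map_pow, bind₁_X_right]
          unfold axv
          rw [if_neg hj, zero_pow hj']
        rw [this, mul_zero]
      rw [hL, coeff_zero, coeff_monomial, if_neg hne]

theorem stmt2 {k : Type*} [Field k] [Infinite k] (p : MvPolynomial (Fin 3) k)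
    (h1 : ∀ t : k, MvPolynomial.eval ![t, 0, 0] p = 0)
    (h2 : ∀ t : k, MvPolynomial.eval ![0, t, 0] p = 0)
    (h3 : ∀ t : k, MvPolynomial.eval ![0, 0, t] p = 0) :
    p ∈ Ideal.span ({MvPolynomial.X 0 * MvPolynomial.X 1,
                     MvPolynomial.X 1 * MvPolynomial.X 2,
                     MvPolynomial.X 2 * MvPolynomial.X 0} :
      Set (MvPolynomial (Fin 3) k)) := by
  classical
  have key : ∀ (i : Fin 3), (∀ t : k, eval (fun j => if j = i then t else 0) p = 0) →
      bind₁ (axv k i) p = 0 := by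
    intro i hi
    apply MvPolynomial.funext
    intro x
    rw [evalAux, hi (x i), map_zero]
  have k0 : bind₁ (axv k 0) p = 0 := key 0 (fun t => by
    have e : (fun j => if j = (0 : Fin 3) then t else 0) = ![t, 0, 0] := by
      ext j; fin_cases j <;> simp
    rw [e]; exact h1 t)
  have k1 : bind₁ (axv k 1) p = 0 := key 1 (fun t => by
    have e : (fun j => if j = (1 : Fin 3) then t else 0) = ![0, t, 0] := by
      ext j; fin_cases j <;> simp
    rw [e]; exact h2 t)
  have k2 : bind₁ (axv k 2) p = 0 := key 2 (fun t => by
    have e : (fun j => if j = (2 : Fin 3) then t else 0) = ![0, 0, t] := by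
      ext j; fin_cases j <;> simp
    rw [e]; exact h3 t)
  have hset : ({MvPolynomial.X 0 * MvPolynomial.X 1, MvPolynomial.X 1 * MvPolynomial.X 2,
      MvPolynomial.X 2 * MvPolynomial.X 0} : Set (MvPolynomial (Fin 3) k)) =
      (fun s => monomial s (1 : k)) ''
        {Finsupp.single 0 1 + Finsupp.single 1 1, Finsupp.single 1 1 + Finsupp.single 2 1,
         Finsupp.single 2 1 + Finsupp.single 0 1} := by
    have e : ∀ i j : Fin 3, (X i : MvPolynomial (Fin 3) k) * X j =
        monomial (Finsupp.single i 1 + Finsupp.single j 1) 1 := by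
      intro i j
      rw [X, X, monomial_mul, one_mul]
    simp [Set.image_insert_eq, Set.image_singleton, e]
  rw [hset, mem_ideal_span_monomial_image]
  intro m hm
  by_contra hcon
  push_neg at hcon
  simp only [Set.mem_insert_iff, Set.mem_singleton_iff, forall_eq_or_imp, forall_eq] at hcon
  obtain ⟨c01, c12, c20⟩ := hcon
  have n01 : ¬(1 ≤ m 0 ∧ 1 ≤ m 1) := by
    rintro ⟨ha, hb⟩
    exact c01 (Finsupp.le_def.mpr (fun j => by
      fin_cases j <;> simp [Finsupp.single_apply, ha, hb]))
  have n12 : ¬(1 ≤ m 1 ∧ 1 ≤ m 2) := by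
    rintro ⟨ha, hb⟩
    exact c12 (Finsupp.le_def.mpr (fun j => by
      fin_cases j <;> simp [Finsupp.single_apply, ha, hb]))
  have n20 : ¬(1 ≤ m 2 ∧ 1 ≤ m 0) := by
    rintro ⟨ha, hb⟩
    exact c20 (Finsupp.le_def.mpr (fun j => by
      fin_cases j <;> simp [Finsupp.single_apply, ha, hb]))
  have hzero : coeff m p = 0 := by
    have hcases : (m 1 = 0 ∧ m 2 = 0) ∨ (m 0 = 0 ∧ m 2 = 0) ∨ (m 0 = 0 ∧ m 1 = 0) := by omega
    rcases hcases with ⟨ha, hb⟩ | ⟨ha, hb⟩ | ⟨ha, hb⟩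
    · rw [← coeffAux 0 m (fun j hj => by
        fin_cases j <;> first | exact absurd rfl hj | exact ha | exact hb) p, k0, coeff_zero]
    · rw [← coeffAux 1 m (fun j hj => by
        fin_cases j <;> first | exact absurd rfl hj | exact ha | exact hb) p, k1, coeff_zero]
    · rw [← coeffAux 2 m (fun j hj => by
        fin_cases j <;> first | exact absurd rfl hj | exact ha | exact hb) p, k2, coeff_zero]
  exact mem_support_iff.mp hm hzero
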